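/- Let κ be an algebraically closed field and let (R, 𝔪) be an Artinian local commutative ring that is a finite-dimensional κ-algebra whose structure map induces an isomorphism κ ≅ R/𝔪. Let λ be a field extension of κ and set S = R ⊗_κ λ. Let P₁, …, P_N ∈ R[T₁, …, T_n] and let 0 ≤ M ≤ N. If there exists s ∈ Sⁿ with Pᵢ(s) = 0 for 1 ≤ i ≤ M and Pᵢ(s) ≠ 0 for M < i ≤ N (coefficients viewed in S via r ↦ r ⊗ 1), then there exists r ∈ Rⁿ with Pᵢ(r) = 0 for 1 ≤ i ≤ M and Pᵢ(r) ≠ 0 for M < i ≤ N. -/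

import Mathlib

open TensorProduct

universe u

section Helpers

variable {κ : Type u} [Field κ] {R : Type u} [CommRing R] [Algebra κ R]
variable {d : ℕ} (b : Module.Basis (Fin d) κ R)
variable {B : Type*} [CommRing B] [Algebra κ B]

/-- The `k`-th coordinate functional on `R ⊗[κ] B` with respect to a basis of `R`. -/
noncomputable def cfAux (k : Fin d) : R ⊗[κ] B →ₗ[κ] B :=
  (TensorProduct.lid κ B).toLinearMap ∘ₗ LinearMap.rTensor B (b.coord k)

lemma cfAux_tmul (k : Fin d) (r : R) (c : B) :
    cfAux b k (r ⊗ₜ[κ] c) = b.repr r k • c := by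
  simp [cfAux, Module.Basis.coord]

lemma cfAux_expansion (x : R ⊗[κ] B) : ∑ k, b k ⊗ₜ[κ] cfAux b k x = x := by
  have key : (∑ k, (TensorProduct.mk κ R B (b k)) ∘ₗ cfAux b k :
      R ⊗[κ] B →ₗ[κ] R ⊗[κ] B) = LinearMap.id := by
    apply TensorProduct.ext'
    intro r c
    simp only [LinearMap.sum_apply, LinearMap.coe_comp, Function.comp_apply,
      TensorProduct.mk_apply, cfAux_tmul, LinearMap.id_coe, id_eq]
    calc ∑ k, b k ⊗ₜ[κ] (b.repr r k • c)
        = ∑ k, (b.repr r k • b k) ⊗ₜ[κ] c := by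
          refine Finset.sum_congr rfl fun k _ => ?_
          rw [TensorProduct.smul_tmul]
      _ = (∑ k, b.repr r k • b k) ⊗ₜ[κ] c := by rw [TensorProduct.sum_tmul]
      _ = r ⊗ₜ[κ] c := by rw [b.sum_repr]
  have := LinearMap.congr_fun key x
  simpa using this

lemma cfAux_eq_zero (x : R ⊗[κ] B) (h : ∀ k, cfAux b k x = 0) : x = 0 := by
  rw [← cfAux_expansion b x]
  simp [h]

lemma cfAux_naturality {C : Type*} [CommRing C] [Algebra κ C] (ψ : B →ₐ[κ] C)
    (k : Fin d) (x : R ⊗[κ] B) :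
    cfAux b k ((Algebra.TensorProduct.map (AlgHom.id κ R) ψ) x) = ψ (cfAux b k x) := by
  have key : (cfAux b k) ∘ₗ (Algebra.TensorProduct.map (AlgHom.id κ R) ψ).toLinearMap
      = ψ.toLinearMap ∘ₗ cfAux b k := by
    apply TensorProduct.ext'
    intro r c
    simp [cfAux_tmul, map_smul]
  exact LinearMap.congr_fun key x

/-- Transfer of a constructible condition from an extension field down to an algebraically
closed base field, via the Nullstellensatz and the Rabinowitsch trick. -/
lemma acf_transfer {κ : Type u} [Field κ] [IsAlgClosed κ] {L : Type*} [Field L] [Algebra κ L]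
    {σ : Type*} [Finite σ] {ι : Type*} (F : ι → MvPolynomial σ κ) (G : MvPolynomial σ κ)
    (y : σ → L) (h0 : ∀ i, MvPolynomial.aeval y (F i) = 0)
    (h1 : MvPolynomial.aeval y G ≠ 0) :
    ∃ x : σ → κ, (∀ i, MvPolynomial.eval x (F i) = 0) ∧ MvPolynomial.eval x G ≠ 0 := by
  classical
  cases nonempty_fintype σ
  set Gp : MvPolynomial (Option σ) κ :=
    MvPolynomial.rename some G * MvPolynomial.X none - 1 with hGp
  set I : Ideal (MvPolynomial (Option σ) κ) :=
    Ideal.span (Set.range (fun i => MvPolynomial.rename some (F i)) ∪ {Gp}) with hI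
  set y' : Option σ → L := fun o => o.elim ((MvPolynomial.aeval y G)⁻¹) y with hy'
  have hgen : ∀ p ∈ (Set.range (fun i => MvPolynomial.rename some (F i)) ∪ {Gp} :
      Set (MvPolynomial (Option σ) κ)), MvPolynomial.aeval y' p = 0 := by
    rintro p (⟨i, rfl⟩ | rfl)
    · rw [MvPolynomial.aeval_rename]
      have : y' ∘ some = y := rfl
      rw [this]
      exact h0 i
    · simp only [hGp, map_sub, map_mul, map_one, MvPolynomial.aeval_rename,
        MvPolynomial.aeval_X]
      have : y' ∘ some = y := rfl
      rw [this]
      have : y' none = (MvPolynomial.aeval y G)⁻¹ := rfl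
      rw [this, mul_inv_cancel₀ h1, sub_self]
  have hIker : ∀ p ∈ I, MvPolynomial.aeval y' p = 0 := by
    intro p hp
    have hle : I ≤ RingHom.ker ((MvPolynomial.aeval y' :
        MvPolynomial (Option σ) κ →ₐ[κ] L) : MvPolynomial (Option σ) κ →+* L) := by
      rw [hI, Ideal.span_le]
      intro q hq
      exact hgen q hq
    exact hle hp
  have hne : I ≠ ⊤ := by
    intro h
    have h1' : (1 : MvPolynomial (Option σ) κ) ∈ I := h ▸ Submodule.mem_top
    have := hIker 1 h1'
    simp at this
  obtain ⟨m, hm, hIm⟩ := Ideal.exists_le_maximal I hne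
  obtain ⟨x', hx'⟩ := (MvPolynomial.isMaximal_iff_eq_vanishingIdeal_singleton).mp hm
  have hv : ∀ p ∈ I, MvPolynomial.eval x' p = 0 := by
    intro p hp
    have : p ∈ MvPolynomial.vanishingIdeal κ ({x'} : Set (Option σ → κ)) := hx' ▸ hIm hp
    exact (MvPolynomial.mem_vanishingIdeal_singleton_iff x' p).mp this
  refine ⟨x' ∘ some, fun i => ?_, ?_⟩
  · have hmem : MvPolynomial.rename some (F i) ∈ I :=
      Ideal.subset_span (Or.inl ⟨i, rfl⟩)
    have := hv _ hmem
    rwa [MvPolynomial.eval_rename] at this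
  · have hmem : Gp ∈ I := Ideal.subset_span (Or.inr rfl)
    have := hv _ hmem
    rw [hGp] at this
    simp only [map_sub, map_mul, map_one, MvPolynomial.eval_rename, MvPolynomial.eval_X,
      sub_eq_zero] at this
    exact left_ne_zero_of_mul_eq_one this

end Helpers

/-- Let `κ` be an algebraically closed field and `R` an equicharacteristic Artinian local ring
with coefficient field `κ`. Let `λ/κ` be a field extension and `S = R ⊗_κ λ`. Then any finite
system of polynomial equalities and inequalities over `R` that has a solution in `S` already
has a solution in `R`. -/
theorem stmt_12 (κ : Type u) [Field κ] [IsAlgClosed κ]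
    (R : Type u) [CommRing R] [IsArtinianRing R] [IsLocalRing R] [Algebra κ R]
    [Module.Finite κ R]
    (hcoef : Function.Bijective ((IsLocalRing.residue R).comp (algebraMap κ R)))
    (lam : Type u) [Field lam] [Algebra κ lam]
    (n N M : ℕ) (hMN : M ≤ N) (P : Fin N → MvPolynomial (Fin n) R)
    (hs : ∃ s : Fin n → R ⊗[κ] lam,
        (∀ i : Fin N, (i : ℕ) < M →
          MvPolynomial.eval₂ (algebraMap R (R ⊗[κ] lam)) s (P i) = 0) ∧
        (∀ i : Fin N, M ≤ (i : ℕ) →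
          MvPolynomial.eval₂ (algebraMap R (R ⊗[κ] lam)) s (P i) ≠ 0)) :
    ∃ r : Fin n → R,
      (∀ i : Fin N, (i : ℕ) < M → MvPolynomial.eval r (P i) = 0) ∧
      (∀ i : Fin N, M ≤ (i : ℕ) → MvPolynomial.eval r (P i) ≠ 0) := by
  classical
  obtain ⟨s, hs0, hs1⟩ := hs
  set d := Module.finrank κ R with hd
  set b : Module.Basis (Fin d) κ R := Module.finBasis κ R with hb
  set A := MvPolynomial (Fin n × Fin d) κ with hA
  -- the generic point
  set sgen : Fin n → R ⊗[κ] A := fun j => ∑ k, b k ⊗ₜ[κ] MvPolynomial.X (j, k) with hsgen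
  -- coordinate polynomials of `P i` evaluated at the generic point
  set Fi : Fin N → Fin d → A := fun i k =>
    cfAux b k (MvPolynomial.eval₂ (algebraMap R (R ⊗[κ] A)) sgen (P i)) with hFi
  -- coordinates of the given solution
  set y : Fin n × Fin d → lam := fun p => cfAux b p.2 (s p.1) with hy
  set Ψ : R ⊗[κ] A →ₐ[κ] R ⊗[κ] lam :=
    Algebra.TensorProduct.map (AlgHom.id κ R) (MvPolynomial.aeval y) with hΨ
  have hΨalg : ∀ r : R, Ψ (algebraMap R (R ⊗[κ] A) r) = algebraMap R (R ⊗[κ] lam) r := by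
    intro r
    simp [hΨ, Algebra.TensorProduct.algebraMap_apply]
  have hΨgen : ∀ j, Ψ (sgen j) = s j := by
    intro j
    rw [hsgen]
    simp only [hΨ, map_sum, Algebra.TensorProduct.map_tmul, AlgHom.coe_id, id_eq,
      MvPolynomial.aeval_X]
    have hX : ∀ k : Fin d, (MvPolynomial.aeval y) (MvPolynomial.X (j, k) : A) = y (j, k) :=
      fun k => MvPolynomial.aeval_X y (j, k)
    simp only [hX]
    exact cfAux_expansion b (s j)
  have hΨeval : ∀ i, Ψ (MvPolynomial.eval₂ (algebraMap R (R ⊗[κ] A)) sgen (P i))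
      = MvPolynomial.eval₂ (algebraMap R (R ⊗[κ] lam)) s (P i) := by
    intro i
    calc Ψ (MvPolynomial.eval₂ (algebraMap R (R ⊗[κ] A)) sgen (P i))
        = (Ψ : R ⊗[κ] A →+* R ⊗[κ] lam)
            (MvPolynomial.eval₂ (algebraMap R (R ⊗[κ] A)) sgen (P i)) := rfl
      _ = MvPolynomial.eval₂ ((Ψ : R ⊗[κ] A →+* R ⊗[κ] lam).comp (algebraMap R (R ⊗[κ] A)))
            ((⇑(Ψ : R ⊗[κ] A →+* R ⊗[κ] lam)) ∘ sgen) (P i) :=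
          MvPolynomial.eval₂_comp_left _ _ _ _
      _ = MvPolynomial.eval₂ (algebraMap R (R ⊗[κ] lam)) s (P i) := by
          congr 1
          · exact RingHom.ext fun ρ => hΨalg ρ
          · exact funext hΨgen
  have hyF : ∀ i k, MvPolynomial.aeval y (Fi i k)
      = cfAux b k (MvPolynomial.eval₂ (algebraMap R (R ⊗[κ] lam)) s (P i)) := by
    intro i k
    rw [← hΨeval i, hΨ, cfAux_naturality]
  -- the equations hold for `y`
  have hy0 : ∀ i : Fin N, (i : ℕ) < M → ∀ k, MvPolynomial.aeval y (Fi i k) = 0 := by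
    intro i hi k
    rw [hyF i k, hs0 i hi, map_zero]
  -- the inequations: for each `i ≥ M` some coordinate is nonzero
  have hy1 : ∀ i : Fin N, M ≤ (i : ℕ) → ∃ k, MvPolynomial.aeval y (Fi i k) ≠ 0 := by
    intro i hi
    by_contra h
    push_neg at h
    apply hs1 i hi
    apply cfAux_eq_zero b
    intro k
    rw [← hyF i k]
    exact h k
  choose K hK using hy1
  set G : A := ∏ i : Fin N, if h : M ≤ (i : ℕ) then Fi i (K i h) else 1 with hG
  have hyG : MvPolynomial.aeval y G ≠ 0 := by
    rw [hG, map_prod]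
    rw [Finset.prod_ne_zero_iff]
    intro i _
    by_cases h : M ≤ (i : ℕ)
    · rw [dif_pos h]; exact hK i h
    · rw [dif_neg h, map_one]; exact one_ne_zero
  -- transfer to a `κ`-point
  obtain ⟨x, hx0, hx1⟩ := acf_transfer
    (ι := {p : Fin N × Fin d // (p.1 : ℕ) < M})
    (fun p => Fi p.1.1 p.1.2) G y (fun p => hy0 p.1.1 p.2 p.1.2) hyG
  -- build the solution in `R`
  set r : Fin n → R := fun j => ∑ k, x (j, k) • b k with hr
  -- evaluation homomorphism to `R`
  set e : R ⊗[κ] A →ₐ[κ] R :=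
    (Algebra.TensorProduct.rid κ κ R).toAlgHom.comp
      (Algebra.TensorProduct.map (AlgHom.id κ R) (MvPolynomial.aeval x)) with he
  have healg : ∀ ρ : R, e (algebraMap R (R ⊗[κ] A) ρ) = ρ := by
    intro ρ
    simp [he, Algebra.TensorProduct.algebraMap_apply]
  have hetmul : ∀ (ρ : R) (a : A), e (ρ ⊗ₜ[κ] a) = MvPolynomial.aeval x a • ρ := by
    intro ρ a
    simp [he]; rfl
  have hegen : ∀ j, e (sgen j) = r j := by
    intro j
    rw [hsgen]
    simp only [map_sum]
    refine Finset.sum_congr rfl fun k _ => ?_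
    rw [hetmul, MvPolynomial.aeval_X]
  have haeval_eq : ∀ q : A, MvPolynomial.aeval x q = MvPolynomial.eval x q := by
    intro q
    rw [MvPolynomial.aeval_def, Algebra.algebraMap_self, MvPolynomial.eval₂_id]
  have heval : ∀ i, MvPolynomial.eval r (P i)
      = ∑ k, MvPolynomial.eval x (Fi i k) • b k := by
    intro i
    have h1 : e (MvPolynomial.eval₂ (algebraMap R (R ⊗[κ] A)) sgen (P i))
        = MvPolynomial.eval r (P i) := by
      calc e (MvPolynomial.eval₂ (algebraMap R (R ⊗[κ] A)) sgen (P i))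
          = (e : R ⊗[κ] A →+* R)
              (MvPolynomial.eval₂ (algebraMap R (R ⊗[κ] A)) sgen (P i)) := rfl
        _ = MvPolynomial.eval₂ ((e : R ⊗[κ] A →+* R).comp (algebraMap R (R ⊗[κ] A)))
              ((⇑(e : R ⊗[κ] A →+* R)) ∘ sgen) (P i) :=
            MvPolynomial.eval₂_comp_left _ _ _ _
        _ = MvPolynomial.eval r (P i) := by
            have hc : (e : R ⊗[κ] A →+* R).comp (algebraMap R (R ⊗[κ] A)) = RingHom.id R :=
              RingHom.ext fun ρ => healg ρ
            have hg : (⇑(e : R ⊗[κ] A →+* R)) ∘ sgen = r := funext hegen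
            rw [hc, hg, MvPolynomial.eval₂_id]
    have h2 : e (MvPolynomial.eval₂ (algebraMap R (R ⊗[κ] A)) sgen (P i))
        = ∑ k, MvPolynomial.eval x (Fi i k) • b k := by
      conv_lhs => rw [← cfAux_expansion b
        (MvPolynomial.eval₂ (algebraMap R (R ⊗[κ] A)) sgen (P i))]
      rw [map_sum]
      refine Finset.sum_congr rfl fun k _ => ?_
      rw [hetmul, haeval_eq]
    rw [← h1, h2]
  refine ⟨r, fun i hi => ?_, fun i hi => ?_⟩
  · rw [heval i]
    refine Finset.sum_eq_zero fun k _ => ?_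
    have := hx0 ⟨(i, k), hi⟩
    simp only at this
    rw [this, zero_smul]
  · intro hzero
    rw [heval i] at hzero
    have hall := Fintype.linearIndependent_iff.mp b.linearIndependent
      (fun k => MvPolynomial.eval x (Fi i k)) hzero
    apply hx1
    rw [hG, map_prod]
    refine Finset.prod_eq_zero (Finset.mem_univ i) ?_
    rw [dif_pos hi]
    exact hall (K i hi)
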